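/- Every E*-unitary inverse semigroup with zero is an inverse ∧-semigroup: any two elements have a meet with respect to the natural partial order. -/
import Mathlib


/-- An inverse semigroup with zero, equipped with its natural partial order:
`a ≤ b ↔ a = b * (a⁻¹ * a)`. -/
class InverseZeroSemigroup (S : Type*) extends Semigroup S, Zero S, Inv S, PartialOrder S where
  mul_inv_mul : ∀ a : S, a * a⁻¹ * a = a
  inv_mul_inv : ∀ a : S, a⁻¹ * a * a⁻¹ = a⁻¹
  idem_comm : ∀ e f : S, e * e = e → f * f = f → e * f = f * e
  zero_mul : ∀ a : S, (0 : S) * a = 0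
  mul_zero : ∀ a : S, a * (0 : S) = 0
  le_iff : ∀ a b : S, a ≤ b ↔ a = b * (a⁻¹ * a)

namespace IZSAux

variable {S : Type*} [InverseZeroSemigroup S]

local notation "mim" => InverseZeroSemigroup.mul_inv_mul
local notation "imi" => InverseZeroSemigroup.inv_mul_inv
local notation "icomm" => InverseZeroSemigroup.idem_comm
local notation "ileiff" => InverseZeroSemigroup.le_iff

lemma idem_inv_mul (a : S) : (a⁻¹ * a) * (a⁻¹ * a) = a⁻¹ * a := by
  calc (a⁻¹ * a) * (a⁻¹ * a) = a⁻¹ * (a * a⁻¹ * a) := by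
        simp only [mul_assoc]
    _ = a⁻¹ * a := by rw [mim]

lemma idem_mul_inv (a : S) : (a * a⁻¹) * (a * a⁻¹) = a * a⁻¹ := by
  calc (a * a⁻¹) * (a * a⁻¹) = a * (a⁻¹ * a * a⁻¹) := by
        simp only [mul_assoc]
    _ = a * a⁻¹ := by rw [imi]

/-- Uniqueness of inverses in an inverse semigroup. -/
lemma inv_unique {a x y : S} (hx1 : a * x * a = a) (hx2 : x * a * x = x)
    (hy1 : a * y * a = a) (hy2 : y * a * y = y) : x = y := by
  have hxa : (x * a) * (x * a) = x * a := by
    calc (x * a) * (x * a) = x * (a * x * a) := by simp only [mul_assoc]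
      _ = x * a := by rw [hx1]
  have hya : (y * a) * (y * a) = y * a := by
    calc (y * a) * (y * a) = y * (a * y * a) := by simp only [mul_assoc]
      _ = y * a := by rw [hy1]
  have hax : (a * x) * (a * x) = a * x := by
    calc (a * x) * (a * x) = (a * x * a) * x := by simp only [mul_assoc]
      _ = a * x := by rw [hx1]
  have hay : (a * y) * (a * y) = a * y := by
    calc (a * y) * (a * y) = (a * y * a) * y := by simp only [mul_assoc]
      _ = a * y := by rw [hy1]
  have key : x = y * (a * x) := by
    calc x = x * a * x := hx2.symm
      _ = x * (a * y * a) * x := by rw [hy1]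
      _ = ((x * a) * (y * a)) * x := by simp only [mul_assoc]
      _ = ((y * a) * (x * a)) * x := by rw [icomm _ _ hxa hya]
      _ = y * (a * (x * a * x)) := by simp only [mul_assoc]
      _ = y * (a * x) := by rw [hx2]
  have key2 : y = y * (a * x) := by
    calc y = y * a * y := hy2.symm
      _ = y * (a * x * a) * y := by rw [hx1]
      _ = y * ((a * x) * (a * y)) := by simp only [mul_assoc]
      _ = y * ((a * y) * (a * x)) := by rw [icomm _ _ hax hay]
      _ = (y * a * y) * (a * x) := by simp only [mul_assoc]
      _ = y * (a * x) := by rw [hy2]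
  rw [key, ← key2]

lemma inv_eq {a x : S} (h1 : a * x * a = a) (h2 : x * a * x = x) : a⁻¹ = x :=
  inv_unique (mim a) (imi a) h1 h2

lemma mul_inv_rev' (a b : S) : (a * b)⁻¹ = b⁻¹ * a⁻¹ := by
  apply inv_eq
  · calc a * b * (b⁻¹ * a⁻¹) * (a * b)
        = a * ((b * b⁻¹) * ((a⁻¹ * a) * b)) := by simp only [mul_assoc]
      _ = a * ((a⁻¹ * a) * ((b * b⁻¹) * b)) := by
          rw [← mul_assoc (b * b⁻¹), icomm _ _ (idem_mul_inv b) (idem_inv_mul a),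
            mul_assoc]
      _ = (a * a⁻¹ * a) * (b * b⁻¹ * b) := by simp only [mul_assoc]
      _ = a * b := by rw [mim, mim]
  · calc b⁻¹ * a⁻¹ * (a * b) * (b⁻¹ * a⁻¹)
        = b⁻¹ * ((a⁻¹ * a) * ((b * b⁻¹) * a⁻¹)) := by simp only [mul_assoc]
      _ = b⁻¹ * ((b * b⁻¹) * ((a⁻¹ * a) * a⁻¹)) := by
          rw [← mul_assoc (a⁻¹ * a), icomm _ _ (idem_inv_mul a) (idem_mul_inv b),
            mul_assoc]
      _ = (b⁻¹ * b * b⁻¹) * (a⁻¹ * a * a⁻¹) := by simp only [mul_assoc]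
      _ = b⁻¹ * a⁻¹ := by rw [imi, imi]

lemma idem_inv {e : S} (he : e * e = e) : e⁻¹ = e := by
  apply inv_eq
  · rw [he, he]
  · rw [he, he]

lemma zero_inv : (0 : S)⁻¹ = 0 :=
  idem_inv (InverseZeroSemigroup.mul_zero 0)

lemma zero_le' (a : S) : (0 : S) ≤ a := by
  rw [ileiff, zero_inv, InverseZeroSemigroup.mul_zero, InverseZeroSemigroup.mul_zero]

lemma le_of_right_idem {f : S} (hf : f * f = f) (b : S) : b * f ≤ b := by
  rw [ileiff, mul_inv_rev', idem_inv hf]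
  symm
  calc b * (f * b⁻¹ * (b * f)) = b * (f * ((b⁻¹ * b) * f)) := by simp only [mul_assoc]
    _ = b * (f * (f * (b⁻¹ * b))) := by rw [icomm _ _ (idem_inv_mul b) hf]
    _ = b * ((f * f) * (b⁻¹ * b)) := by simp only [mul_assoc]
    _ = b * (f * (b⁻¹ * b)) := by rw [hf]
    _ = b * ((b⁻¹ * b) * f) := by rw [icomm _ _ hf (idem_inv_mul b)]
    _ = (b * b⁻¹ * b) * f := by simp only [mul_assoc]
    _ = b * f := by rw [mim]

lemma le_of_left_idem {e : S} (he : e * e = e) (b : S) : e * b ≤ b := by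
  rw [ileiff, mul_inv_rev', idem_inv he]
  symm
  calc b * (b⁻¹ * e * (e * b)) = (b * b⁻¹) * ((e * e) * b) := by simp only [mul_assoc]
    _ = (b * b⁻¹) * (e * b) := by rw [he]
    _ = ((b * b⁻¹) * e) * b := by rw [← mul_assoc]
    _ = (e * (b * b⁻¹)) * b := by rw [icomm _ _ (idem_mul_inv b) he]
    _ = e * (b * b⁻¹ * b) := by simp only [mul_assoc]
    _ = e * b := by rw [mim]

lemma le_right_form {a b : S} (h : a ≤ b) : a = b * (a⁻¹ * a) :=
  (ileiff a b).mp h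

lemma le_left_form {a b : S} (h : a ≤ b) : a = (a * a⁻¹) * b := by
  have h1 := le_right_form h
  have haa : a * a⁻¹ = b * ((a⁻¹ * a) * b⁻¹) := by
    calc a * a⁻¹ = (b * (a⁻¹ * a)) * (b * (a⁻¹ * a))⁻¹ := by rw [← h1]
      _ = (b * (a⁻¹ * a)) * ((a⁻¹ * a)⁻¹ * b⁻¹) := by rw [mul_inv_rev']
      _ = (b * (a⁻¹ * a)) * ((a⁻¹ * a) * b⁻¹) := by rw [idem_inv (idem_inv_mul a)]
      _ = b * (((a⁻¹ * a) * (a⁻¹ * a)) * b⁻¹) := by simp only [mul_assoc]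
      _ = b * ((a⁻¹ * a) * b⁻¹) := by rw [idem_inv_mul]
  symm
  calc (a * a⁻¹) * b = b * ((a⁻¹ * a) * b⁻¹) * b := by rw [haa]
    _ = b * ((a⁻¹ * a) * (b⁻¹ * b)) := by simp only [mul_assoc]
    _ = b * ((b⁻¹ * b) * (a⁻¹ * a)) := by rw [icomm _ _ (idem_inv_mul a) (idem_inv_mul b)]
    _ = (b * b⁻¹ * b) * (a⁻¹ * a) := by simp only [mul_assoc]
    _ = b * (a⁻¹ * a) := by rw [mim]
    _ = a := h1.symm

lemma inv_le_inv' {a b : S} (h : a ≤ b) : a⁻¹ ≤ b⁻¹ := by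
  have h1 := le_right_form h
  have key : a⁻¹ = (a⁻¹ * a) * b⁻¹ := by
    calc a⁻¹ = (b * (a⁻¹ * a))⁻¹ := by rw [← h1]
      _ = (a⁻¹ * a)⁻¹ * b⁻¹ := by rw [mul_inv_rev']
      _ = (a⁻¹ * a) * b⁻¹ := by rw [idem_inv (idem_inv_mul a)]
  rw [key]
  exact le_of_left_idem (idem_inv_mul a) b⁻¹

lemma mul_le_mul_right' {a b : S} (h : a ≤ b) (c : S) : a * c ≤ b * c := by
  have h1 := le_left_form h
  have key : a * c = (a * a⁻¹) * (b * c) := by rw [← mul_assoc, ← h1]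
  rw [key]
  exact le_of_left_idem (idem_mul_inv a) (b * c)

lemma mul_le_mul_left' {c d : S} (h : c ≤ d) (a : S) : a * c ≤ a * d := by
  have h1 := le_right_form h
  have key : a * c = (a * d) * (c⁻¹ * c) := by rw [mul_assoc, ← h1]
  rw [key]
  exact le_of_right_idem (idem_inv_mul c) (a * d)

lemma mul_le_mul' {a b c d : S} (h1 : a ≤ b) (h2 : c ≤ d) : a * c ≤ b * d :=
  le_trans (mul_le_mul_right' h1 c) (mul_le_mul_left' h2 b)

lemma mul_idem_of_le {c t : S} (h : c ≤ t) : c * (t⁻¹ * t) = c := by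
  have h1 := le_right_form h
  calc c * (t⁻¹ * t) = (t * (c⁻¹ * c)) * (t⁻¹ * t) := by rw [← h1]
    _ = t * ((c⁻¹ * c) * (t⁻¹ * t)) := by simp only [mul_assoc]
    _ = t * ((t⁻¹ * t) * (c⁻¹ * c)) := by rw [icomm _ _ (idem_inv_mul c) (idem_inv_mul t)]
    _ = (t * t⁻¹ * t) * (c⁻¹ * c) := by simp only [mul_assoc]
    _ = t * (c⁻¹ * c) := by rw [mim]
    _ = c := h1.symm

lemma inv_mul_of_le {c t : S} (h : c ≤ t) : t⁻¹ * c = c⁻¹ * c := by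
  have h1 := le_right_form h
  calc t⁻¹ * c = t⁻¹ * (t * (c⁻¹ * c)) := by rw [← h1]
    _ = (t⁻¹ * t) * (c⁻¹ * c) := by simp only [mul_assoc]
    _ = (c⁻¹ * c) * (t⁻¹ * t) := icomm _ _ (idem_inv_mul t) (idem_inv_mul c)
    _ = c⁻¹ * (c * (t⁻¹ * t)) := by rw [mul_assoc]
    _ = c⁻¹ * c := by rw [mul_idem_of_le h]

end IZSAux

/-- Every `E*`-unitary inverse semigroup with zero is an inverse
∧-semigroup: any two elements have a greatest lower bound with respect to the
natural partial order. -/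
theorem eStarUnitary_has_meets {S : Type*} [InverseZeroSemigroup S]
    (hE : ∀ e s : S, e ≠ 0 → e * e = e → e ≤ s → s * s = s) :
    ∀ a b : S, ∃ m : S, m ≤ a ∧ m ≤ b ∧ ∀ c : S, c ≤ a → c ≤ b → c ≤ m := by
  intro a b
  by_cases h : ∀ c : S, c ≤ a → c ≤ b → c = 0
  · refine ⟨0, IZSAux.zero_le' a, IZSAux.zero_le' b, fun c hca hcb => ?_⟩
    rw [h c hca hcb]
  · push_neg at h
    obtain ⟨c, hca, hcb, hc0⟩ := h
    have hcc : (c * c⁻¹) ≤ a * b⁻¹ :=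
      IZSAux.mul_le_mul' hca (IZSAux.inv_le_inv' hcb)
    have hccne : c * c⁻¹ ≠ 0 := by
      intro hz
      apply hc0
      calc c = c * c⁻¹ * c := (InverseZeroSemigroup.mul_inv_mul c).symm
        _ = 0 * c := by rw [hz]
        _ = 0 := InverseZeroSemigroup.zero_mul c
    have habi : (a * b⁻¹) * (a * b⁻¹) = a * b⁻¹ :=
      hE _ _ hccne (IZSAux.idem_mul_inv c) hcc
    refine ⟨a * b⁻¹ * b, ?_, ?_, ?_⟩
    · rw [mul_assoc]
      exact IZSAux.le_of_right_idem (IZSAux.idem_inv_mul b) a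
    · exact IZSAux.le_of_left_idem habi b
    · intro c' hc'a hc'b
      rw [InverseZeroSemigroup.le_iff]
      calc c' = a * (c'⁻¹ * c') := IZSAux.le_right_form hc'a
        _ = a * (b⁻¹ * c') := by rw [IZSAux.inv_mul_of_le hc'b]
        _ = a * (b⁻¹ * (b * (c'⁻¹ * c'))) := by rw [← IZSAux.le_right_form hc'b]
        _ = a * b⁻¹ * b * (c'⁻¹ * c') := by simp only [mul_assoc]
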